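/- For any permutation σ of [n], crs(σ⁻¹) = crs(σ) + ut(σ) − lt(σ), where ut(σ) = |{i : σ⁻¹(i) < i < σ(i)}| and lt(σ) = |{i : σ(i) < i < σ⁻¹(i)}|. -/

import Mathlib

open Finset Polynomial Equiv

attribute [local instance] Classical.propDecidable

def isCrossing {n : ℕ} (σ : Equiv.Perm (Fin n)) (i j : Fin n) : Prop :=
  (i < j ∧ j < σ i ∧ σ i < σ j) ∨ (σ i < σ j ∧ σ j ≤ i ∧ i < j)

noncomputable def crs {n : ℕ} (σ : Equiv.Perm (Fin n)) : ℕ :=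
  (Finset.univ.filter (fun p : Fin n × Fin n => isCrossing σ p.1 p.2)).card

def avoids123 {n : ℕ} (σ : Equiv.Perm (Fin n)) : Prop :=
  ¬ ∃ i j k : Fin n, i < j ∧ j < k ∧ σ i < σ j ∧ σ j < σ k

def avoids132 {n : ℕ} (σ : Equiv.Perm (Fin n)) : Prop :=
  ¬ ∃ i j k : Fin n, i < j ∧ j < k ∧ σ i < σ k ∧ σ k < σ j

def avoids213 {n : ℕ} (σ : Equiv.Perm (Fin n)) : Prop :=
  ¬ ∃ i j k : Fin n, i < j ∧ j < k ∧ σ j < σ i ∧ σ i < σ k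

def avoids231 {n : ℕ} (σ : Equiv.Perm (Fin n)) : Prop :=
  ¬ ∃ i j k : Fin n, i < j ∧ j < k ∧ σ k < σ i ∧ σ i < σ j

def avoids312 {n : ℕ} (σ : Equiv.Perm (Fin n)) : Prop :=
  ¬ ∃ i j k : Fin n, i < j ∧ j < k ∧ σ j < σ k ∧ σ k < σ i

def avoids321 {n : ℕ} (σ : Equiv.Perm (Fin n)) : Prop :=
  ¬ ∃ i j k : Fin n, i < j ∧ j < k ∧ σ k < σ j ∧ σ j < σ i

noncomputable def ut {n : ℕ} (σ : Equiv.Perm (Fin n)) : ℕ :=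
  (Finset.univ.filter (fun i : Fin n => σ⁻¹ i < i ∧ i < σ i)).card

noncomputable def lt' {n : ℕ} (σ : Equiv.Perm (Fin n)) : ℕ :=
  (Finset.univ.filter (fun i : Fin n => σ i < i ∧ i < σ⁻¹ i)).card

noncomputable def Uset {n : ℕ} (σ : Equiv.Perm (Fin n)) : Finset (Fin n × Fin n) :=
  Finset.univ.filter (fun p => p.1 < p.2 ∧ p.2 < σ p.1 ∧ σ p.1 < σ p.2)

noncomputable def Lset {n : ℕ} (σ : Equiv.Perm (Fin n)) : Finset (Fin n × Fin n) :=
  Finset.univ.filter (fun p => σ p.1 < σ p.2 ∧ σ p.2 < p.1 ∧ p.1 < p.2)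

noncomputable def Eset {n : ℕ} (σ : Equiv.Perm (Fin n)) : Finset (Fin n × Fin n) :=
  Finset.univ.filter (fun p => σ p.1 < σ p.2 ∧ σ p.2 = p.1 ∧ p.1 < p.2)

lemma crs_eq' {n : ℕ} (σ : Equiv.Perm (Fin n)) :
    (Finset.univ.filter (fun p : Fin n × Fin n => isCrossing σ p.1 p.2)).card
      = (Uset σ).card + (Lset σ).card + (Eset σ).card := by
  have hU : Finset.univ.filter (fun p : Fin n × Fin n => isCrossing σ p.1 p.2)
      = Uset σ ∪ (Lset σ ∪ Eset σ) := by
    ext p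
    simp only [mem_filter, mem_univ, true_and]
    simp only [Uset, Lset, Eset, isCrossing, mem_union, mem_filter, mem_univ, true_and]
    rw [le_iff_lt_or_eq]
    tauto
  have d2 : Disjoint (Lset σ) (Eset σ) := by
    rw [Finset.disjoint_left]
    rintro p hp hq
    simp only [Lset, Eset, mem_filter, mem_univ, true_and] at hp hq
    exact absurd hq.2.1 (ne_of_lt hp.2.1)
  have d1 : Disjoint (Uset σ) (Lset σ ∪ Eset σ) := by
    rw [Finset.disjoint_left]
    rintro p hp hq
    simp only [Uset, Lset, Eset, mem_union, mem_filter, mem_univ, true_and] at hp hq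
    rcases hq with hq | hq
    · exact absurd (hp.1.trans (hp.2.1.trans (hp.2.2.trans hq.2.1))) (lt_irrefl _)
    · exact absurd (hq.2.1 ▸ (hp.1.trans (hp.2.1.trans hp.2.2))) (lt_irrefl _)
  rw [hU, Finset.card_union_of_disjoint d1, Finset.card_union_of_disjoint d2]
  ring

lemma card_U_inv {n : ℕ} (σ : Equiv.Perm (Fin n)) : (Uset σ⁻¹).card = (Lset σ).card := by
  apply Finset.card_bij' (fun p _ => (σ⁻¹ p.1, σ⁻¹ p.2)) (fun p _ => (σ p.1, σ p.2))
  · intro p hp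
    simp only [Uset, Lset, mem_filter, mem_univ, true_and, Equiv.Perm.coe_inv, Equiv.apply_symm_apply] at hp ⊢
    exact ⟨hp.1, hp.2.1, hp.2.2⟩
  · intro p hp
    simp only [Uset, Lset, mem_filter, mem_univ, true_and, Equiv.Perm.coe_inv, Equiv.symm_apply_apply] at hp ⊢
    exact hp
  · intro p _; simp
  · intro p _; simp

lemma card_L_inv {n : ℕ} (σ : Equiv.Perm (Fin n)) : (Lset σ⁻¹).card = (Uset σ).card := by
  apply Finset.card_bij' (fun p _ => (σ⁻¹ p.1, σ⁻¹ p.2)) (fun p _ => (σ p.1, σ p.2))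
  · intro p hp
    simp only [Uset, Lset, mem_filter, mem_univ, true_and, Equiv.Perm.coe_inv, Equiv.apply_symm_apply] at hp ⊢
    exact hp
  · intro p hp
    simp only [Uset, Lset, mem_filter, mem_univ, true_and, Equiv.Perm.coe_inv, Equiv.symm_apply_apply] at hp ⊢
    exact hp
  · intro p _; simp
  · intro p _; simp

lemma card_E_inv {n : ℕ} (σ : Equiv.Perm (Fin n)) :
    (Eset σ⁻¹).card = (Finset.univ.filter (fun i : Fin n => σ⁻¹ i < i ∧ i < σ i)).card := by
  apply Finset.card_bij' (fun p _ => p.1) (fun i _ => (i, σ i))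
  · intro p hp
    simp only [Eset, mem_filter, mem_univ, true_and] at hp ⊢
    obtain ⟨h1, h2, h3⟩ := hp
    refine ⟨h2 ▸ h1, ?_⟩
    have : p.2 = σ p.1 := by rw [← h2, Equiv.Perm.coe_inv, Equiv.apply_symm_apply]
    exact this ▸ h3
  · intro i hi
    simp only [Eset, mem_filter, mem_univ, true_and, Equiv.Perm.coe_inv, Equiv.symm_apply_apply] at hi ⊢
    exact hi
  · intro p hp
    simp only [Eset, mem_filter, mem_univ, true_and] at hp
    have : p.2 = σ p.1 := by rw [← hp.2.1, Equiv.Perm.coe_inv, Equiv.apply_symm_apply]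
    exact Prod.ext rfl this.symm
  · intro i _; rfl

lemma card_E_self {n : ℕ} (σ : Equiv.Perm (Fin n)) :
    (Eset σ).card = (Finset.univ.filter (fun i : Fin n => σ i < i ∧ i < σ⁻¹ i)).card := by
  apply Finset.card_bij' (fun p _ => p.1) (fun i _ => (i, σ⁻¹ i))
  · intro p hp
    simp only [Eset, mem_filter, mem_univ, true_and] at hp ⊢
    obtain ⟨h1, h2, h3⟩ := hp
    refine ⟨h2 ▸ h1, ?_⟩
    have : p.2 = σ⁻¹ p.1 := by rw [← h2, Equiv.Perm.coe_inv, Equiv.symm_apply_apply]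
    exact this ▸ h3
  · intro i hi
    simp only [Eset, mem_filter, mem_univ, true_and, Equiv.Perm.coe_inv, Equiv.apply_symm_apply] at hi ⊢
    exact hi
  · intro p hp
    simp only [Eset, mem_filter, mem_univ, true_and] at hp
    have : p.2 = σ⁻¹ p.1 := by rw [← hp.2.1, Equiv.Perm.coe_inv, Equiv.symm_apply_apply]
    exact Prod.ext rfl this.symm
  · intro i _; rfl

theorem crs_inv_aux (n : ℕ) (σ : Equiv.Perm (Fin n)) :
    ((Finset.univ.filter (fun p : Fin n × Fin n => isCrossing σ⁻¹ p.1 p.2)).card : ℤ)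
      = ((Finset.univ.filter (fun p : Fin n × Fin n => isCrossing σ p.1 p.2)).card : ℤ)
        + ((Finset.univ.filter (fun i : Fin n => σ⁻¹ i < i ∧ i < σ i)).card : ℤ)
        - ((Finset.univ.filter (fun i : Fin n => σ i < i ∧ i < σ⁻¹ i)).card : ℤ) := by
  rw [crs_eq', crs_eq', card_U_inv, card_L_inv, card_E_inv, ← card_E_self]
  push_cast
  ring

theorem crs_inv (n : ℕ) (σ : Equiv.Perm (Fin n)) :
    (crs σ⁻¹ : ℤ) = (crs σ : ℤ) + (ut σ : ℤ) - (lt' σ : ℤ) := by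
  simp only [crs, ut, lt']
  exact crs_inv_aux n σ
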